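/- Let P be a finite set of real numbers with 0 ∈ P, and let a = (a_n) be a sequence of real numbers such that the series ∑_n a_n is absolutely convergent and |a_n| ≥ |a_{n+1}| > 0 for all n ∈ ℕ. Then there exists a sequence ((x_n, y_n)) in ℝ² with ∑_n ‖(x_n,y_n)‖ < ∞ such that the horizontal cut of its achievement set at height 0 equals the set of P-sums of a: E(x_n, y_n)_0 = S(P,a). -/

import Mathlib

lemma digit_unique (K : ℕ) (c : ℕ → ℤ) (hb : ∀ n, |c n| ≤ (K : ℤ))
    (h : ∑' n, (c n : ℝ) * (((K : ℝ) + 2)⁻¹) ^ (n + 1) = 0) : ∀ n, c n = 0 := by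
  classical
  set r : ℝ := ((K : ℝ) + 2)⁻¹ with hrdef
  have hK2 : (0:ℝ) < (K:ℝ) + 2 := by positivity
  have hr0 : 0 < r := by positivity
  have hr1 : r < 1 := by
    rw [hrdef, inv_lt_one_iff₀]; right; linarith
  set f : ℕ → ℝ := fun n => (c n : ℝ) * r ^ (n + 1) with hfdef
  have hbf : ∀ n, |f n| ≤ (K : ℝ) * r ^ (n + 1) := by
    intro n
    rw [hfdef, abs_mul, abs_pow, abs_of_pos hr0]
    have : |(c n : ℝ)| ≤ (K : ℝ) := by exact_mod_cast hb n
    exact mul_le_mul_of_nonneg_right this (by positivity)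
  have hsum : Summable f := by
    apply Summable.of_abs
    apply Summable.of_nonneg_of_le (fun n => abs_nonneg _) hbf
    have : Summable (fun n : ℕ => ((K : ℝ) * r) * r ^ n) :=
      (summable_geometric_of_lt_one hr0.le hr1).mul_left _
    exact this.congr (fun n => by ring)
  by_contra hc
  push_neg at hc
  have hex : ∃ n, c n ≠ 0 := hc
  set n0 := Nat.find hex with hn0
  have hn0ne : c n0 ≠ 0 := Nat.find_spec hex
  have hmin : ∀ m < n0, c m = 0 := fun m hm => not_not.mp (Nat.find_min hex hm)
  have hsplit := Summable.sum_add_tsum_nat_add (f := f) (n0 + 1) hsum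
  have hhead : (∑ i ∈ Finset.range (n0 + 1), f i) = f n0 := by
    rw [Finset.sum_range_succ]
    have : ∀ i ∈ Finset.range n0, f i = 0 := by
      intro i hi
      simp only [hfdef]
      rw [hmin i (Finset.mem_range.mp hi)]
      simp
    rw [Finset.sum_eq_zero this, zero_add]
  rw [hhead, h] at hsplit
  have htail : |∑' i : ℕ, f (i + (n0 + 1))| ≤ (K : ℝ) * r ^ (n0 + 2) * (1 - r)⁻¹ := by
    have h1 : ‖∑' i : ℕ, f (i + (n0 + 1))‖ ≤ ∑' i : ℕ, ‖f (i + (n0 + 1))‖ :=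
      norm_tsum_le_tsum_norm (by
        simpa only [Real.norm_eq_abs, Function.comp_def] using ((hsum.abs).comp_injective (add_left_injective (n0+1))))
    have hsg : Summable (fun i : ℕ => ((K : ℝ) * r ^ (n0 + 2)) * r ^ i) :=
      (summable_geometric_of_lt_one hr0.le hr1).mul_left _
    have h2 : ∑' i : ℕ, |f (i + (n0 + 1))| ≤ ∑' i : ℕ, ((K : ℝ) * r ^ (n0 + 2)) * r ^ i := by
      apply Summable.tsum_le_tsum _ ((hsum.abs).comp_injective (add_left_injective (n0+1))) hsg
      intro i
      calc |f (i + (n0 + 1))| ≤ (K : ℝ) * r ^ (i + (n0 + 1) + 1) := hbf _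
      _ = (K : ℝ) * r ^ (n0 + 2) * r ^ i := by ring
    simp only [Real.norm_eq_abs] at h1
    calc |∑' i : ℕ, f (i + (n0 + 1))| ≤ _ := h1
    _ ≤ _ := h2
    _ = (K : ℝ) * r ^ (n0 + 2) * (1 - r)⁻¹ := by
        rw [tsum_mul_left, tsum_geometric_of_lt_one hr0.le hr1]
  have hlow : r ^ (n0 + 1) ≤ |f n0| := by
    rw [hfdef, abs_mul, abs_pow, abs_of_pos hr0]
    have : (1 : ℝ) ≤ |(c n0 : ℝ)| := by
      have : (1 : ℤ) ≤ |c n0| := Int.one_le_abs hn0ne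
      exact_mod_cast this
    nlinarith [pow_pos hr0 (n0+1)]
  have hfn0 : |f n0| = |∑' i : ℕ, f (i + (n0 + 1))| := by
    have : f n0 = -∑' i : ℕ, f (i + (n0 + 1)) := by linarith
    rw [this, abs_neg]
  have hkey : (K : ℝ) * r ^ (n0 + 2) * (1 - r)⁻¹ < r ^ (n0 + 1) := by
    have h1r : 1 - r = ((K:ℝ) + 1) / ((K:ℝ) + 2) := by
      rw [hrdef]; field_simp; ring
    have hK1 : (0:ℝ) < (K:ℝ) + 1 := by positivity
    have : (K : ℝ) * r * (1 - r)⁻¹ < 1 := by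
      rw [h1r, hrdef]
      have heq : (K:ℝ) * ((K:ℝ)+2)⁻¹ * (((K:ℝ)+1)/((K:ℝ)+2))⁻¹ = (K:ℝ)/((K:ℝ)+1) := by
        field_simp
      rw [heq, div_lt_one hK1]; linarith
    calc (K : ℝ) * r ^ (n0 + 2) * (1 - r)⁻¹ = ((K : ℝ) * r * (1 - r)⁻¹) * r ^ (n0 + 1) := by ring
    _ < 1 * r ^ (n0 + 1) := by
        apply mul_lt_mul_of_pos_right this (pow_pos hr0 _)
    _ = r ^ (n0 + 1) := one_mul _
  rw [hfn0] at hlow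
  linarith

/-- The achievement set of a sequence: the set of all subsums. -/
def achievementSet {E : Type*} [AddCommMonoid E] [TopologicalSpace E] (f : ℕ → E) : Set E :=
  {s | ∃ A : Set ℕ, s = ∑' n : A, f n}

/-- The set of `P`-sums of a sequence `a`. -/
def PSums (P : Set ℝ) (a : ℕ → ℝ) : Set ℝ :=
  {s | ∃ ε : ℕ → ℝ, (∀ n, ε n ∈ P) ∧ s = ∑' n, ε n * a n}

theorem stmt_8 (P : Set ℝ) (hPfin : P.Finite) (hP0 : (0 : ℝ) ∈ P)
    (a : ℕ → ℝ) (ha : Summable fun n => |a n|)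
    (hmono : ∀ n, |a (n + 1)| ≤ |a n|) (hpos : ∀ n, 0 < |a n|) :
    ∃ f : ℕ → ℝ × ℝ, (Summable fun n => ‖f n‖) ∧
      {w : ℝ | (w, (0 : ℝ)) ∈ achievementSet f} = PSums P a := by
  classical
  obtain ⟨M, hM⟩ : ∃ M, ∀ q ∈ P, |q| ≤ M := by
    obtain ⟨M, hM⟩ := (hPfin.image abs).bddAbove
    exact ⟨M, fun q hq => hM ⟨q, hq, rfl⟩⟩
  have hM0 : 0 ≤ M := le_trans (abs_nonneg 0) (hM 0 hP0)
  have hPd : (P \ {0}).Finite := hPfin.subset Set.diff_subset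
  set k := hPd.toFinset.card with hk
  set pe := hPd.toFinset.equivFin with hpe
  set p : Fin k → ℝ := fun j => ((pe.symm j : ℝ)) with hp
  have hpmem : ∀ j, p j ∈ P \ {0} := fun j => hPd.mem_toFinset.mp (pe.symm j).2
  have hpinj : Function.Injective p := fun i j hij => pe.symm.injective (Subtype.ext hij)
  have hpsurj : ∀ q ∈ P \ {0}, ∃ j, p j = q := by
    intro q hq
    refine ⟨pe ⟨q, hPd.mem_toFinset.mpr hq⟩, ?_⟩
    simp [hp]
  set K : ℕ := k + 1 with hK
  set r : ℝ := ((K : ℝ) + 2)⁻¹ with hrdef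
  have hr0 : 0 < r := by rw [hrdef]; positivity
  have hr1 : r < 1 := by
    rw [hrdef, inv_lt_one_iff₀]; right
    have : (0:ℝ) ≤ (K:ℝ) := Nat.cast_nonneg _
    linarith
  set p' : Fin (k+1) → ℝ := fun j => if h : (j : ℕ) < k then p ⟨j, h⟩ else 0 with hp'
  set sg : Fin (k+1) → ℝ := fun j => if (j : ℕ) < k then 1 else -1 with hsg
  set u : ℕ × Fin (k+1) → ℝ := fun q => p' q.2 * a q.1 with hu
  set v : ℕ × Fin (k+1) → ℝ := fun q => sg q.2 * r ^ (q.1 + 1) with hv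
  set g : ℕ × Fin (k+1) → ℝ × ℝ := fun q => (u q, v q) with hg
  have hp'le : ∀ j, |p' j| ≤ M := by
    intro j
    simp only [hp']
    split_ifs with h
    · exact hM _ (hpmem ⟨j, h⟩).1
    · simpa using hM0
  have hvabs : ∀ q, |v q| = r ^ (q.1 + 1) := by
    intro q
    simp only [hv]
    rw [abs_mul, abs_pow, abs_of_pos hr0]
    have : |sg q.2| = 1 := by simp only [hsg]; split_ifs <;> simp
    rw [this, one_mul]
  -- summability
  have hgeo : Summable (fun n : ℕ => r ^ (n + 1)) :=
    ((summable_geometric_of_lt_one hr0.le hr1).mul_left r).congr (fun n => by ring)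
  have haM : Summable (fun n : ℕ => M * |a n| + r ^ (n + 1)) := (ha.mul_left M).add hgeo
  have hgnorm : ∀ q : ℕ × Fin (k+1), ‖g q‖ ≤ M * |a q.1| + r ^ (q.1 + 1) := by
    intro q
    rw [Prod.norm_def]
    have hr' : (0:ℝ) < r ^ (q.1 + 1) := pow_pos hr0 _
    have hu' : |u q| ≤ M * |a q.1| := by
      simp only [hu, abs_mul]
      exact mul_le_mul_of_nonneg_right (hp'le _) (abs_nonneg _)
    apply max_le
    · rw [Real.norm_eq_abs]
      calc |(g q).1| = |u q| := rfl
      _ ≤ M * |a q.1| := hu'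
      _ ≤ _ := by linarith
    · rw [Real.norm_eq_abs]
      calc |(g q).2| = |v q| := rfl
      _ = r ^ (q.1 + 1) := hvabs q
      _ ≤ _ := by nlinarith [abs_nonneg (a q.1)]
  have hFprod : Summable (fun q : ℕ × Fin (k+1) => M * |a q.1| + r ^ (q.1 + 1)) := by
    have hF0 : ∀ q : ℕ × Fin (k+1), 0 ≤ M * |a q.1| + r ^ (q.1 + 1) :=
      fun q => add_nonneg (mul_nonneg hM0 (abs_nonneg _)) (pow_nonneg hr0.le _)
    apply (summable_prod_of_nonneg (f := fun q : ℕ × Fin (k+1) => M * |a q.1| + r ^ (q.1 + 1))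
      hF0).mpr
    refine ⟨fun n => Summable.of_finite, ?_⟩
    apply Summable.congr ((haM.mul_left ((k:ℝ)+1)))
    intro n
    rw [tsum_fintype]
    simp [Finset.sum_const, Finset.card_univ]
    push_cast
    ring
  have hsum_norm_g : Summable (fun q => ‖g q‖) :=
    Summable.of_nonneg_of_le (fun q => norm_nonneg _) hgnorm hFprod
  have hsum_u : Summable u :=
    Summable.of_abs (Summable.of_nonneg_of_le (fun q => abs_nonneg _)
      (fun q => by simpa [Real.norm_eq_abs] using norm_fst_le (g q)) hsum_norm_g)
  have hsum_v : Summable v :=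
    Summable.of_abs (Summable.of_nonneg_of_le (fun q => abs_nonneg _)
      (fun q => by simpa [Real.norm_eq_abs] using norm_snd_le (g q)) hsum_norm_g)
  haveI : Infinite (ℕ × Fin (k+1)) := Prod.infinite_of_left
  haveI := Denumerable.ofEncodableOfInfinite (ℕ × Fin (k+1))
  set e : ℕ × Fin (k+1) ≃ ℕ := Denumerable.eqv _ with he
  refine ⟨fun n => g (e.symm n), ?_, ?_⟩
  · exact (Equiv.summable_iff e.symm (f := fun q => ‖g q‖)).mpr hsum_norm_g
  -- translation
  have htrans : ∀ w : ℝ, ((w, (0:ℝ)) ∈ achievementSet (fun n => g (e.symm n))) ↔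
      ∃ B : Set (ℕ × Fin (k+1)), (w, (0:ℝ)) = ∑' q : B, g q := by
    intro w
    constructor
    · rintro ⟨A, hA⟩
      refine ⟨e.symm '' A, ?_⟩
      rw [hA, ← Equiv.tsum_eq (Equiv.Set.imageOfInjOn e.symm A (e.symm.injective.injOn))
        (fun q : (e.symm '' A) => g q)]
      exact tsum_congr fun c => rfl
    · rintro ⟨B, hB⟩
      refine ⟨e '' B, ?_⟩
      rw [hB, ← Equiv.tsum_eq (Equiv.Set.imageOfInjOn e B (e.injective.injOn))
        (fun q : (e '' B) => g (e.symm q))]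
      exact tsum_congr fun b => (congrArg g (e.symm_apply_apply (b : ℕ × Fin (k+1)))).symm
  -- Fubini decomposition
  have hFub : ∀ B : Set (ℕ × Fin (k+1)), (∑' q : B, g q) =
      ((∑' n : ℕ, ∑ j : Fin (k+1), B.indicator u (n, j)),
       (∑' n : ℕ, ∑ j : Fin (k+1), B.indicator v (n, j))) := by
    intro B
    have h1 : (∑' q : B, g q) = ((∑' q : B, u q), (∑' q : B, v q)) :=
      ((hsum_u.subtype B).hasSum.prodMk (hsum_v.subtype B).hasSum).tsum_eq
    rw [h1, Prod.mk.injEq]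
    constructor
    · rw [tsum_subtype, Summable.tsum_prod' (hsum_u.indicator B) (fun n => Summable.of_finite)]
      exact tsum_congr fun n => tsum_fintype _
    · rw [tsum_subtype, Summable.tsum_prod' (hsum_v.indicator B) (fun n => Summable.of_finite)]
      exact tsum_congr fun n => tsum_fintype _
  have hind : ∀ (B : Set (ℕ × Fin (k+1))) (f : ℕ × Fin (k+1) → ℝ) (n : ℕ),
      (∑ j : Fin (k+1), B.indicator f (n, j)) =
        ∑ j ∈ Finset.univ.filter (fun j => (n, j) ∈ B), f (n, j) := by
    intro B f n
    rw [Finset.sum_filter]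
    exact Finset.sum_congr rfl (fun j _ => Set.indicator_apply _ _ _)
  ext w
  simp only [Set.mem_setOf_eq, PSums]
  rw [htrans w]
  constructor
  · rintro ⟨B, hB⟩
    rw [hFub B] at hB
    have hw : w = ∑' n : ℕ, ∑ j : Fin (k+1), B.indicator u (n, j) := congrArg Prod.fst hB
    have hy : (0:ℝ) = ∑' n : ℕ, ∑ j : Fin (k+1), B.indicator v (n, j) := congrArg Prod.snd hB
    set c : ℕ → ℤ := fun n =>
      ∑ j : Fin (k+1), (if (n, j) ∈ B then (if (j : ℕ) < k then 1 else -1) else 0) with hc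
    have hcb : ∀ n, |c n| ≤ (K : ℤ) := by
      intro n
      calc |c n| ≤ ∑ j : Fin (k+1),
          |if (n, j) ∈ B then (if (j : ℕ) < k then (1:ℤ) else -1) else 0| :=
        Finset.abs_sum_le_sum_abs _ _
      _ ≤ ∑ _j : Fin (k+1), 1 := Finset.sum_le_sum (fun j _ => by split_ifs <;> simp)
      _ = (K : ℤ) := by simp [hK]
    have hveq : ∀ n, (∑ j : Fin (k+1), B.indicator v (n, j)) = (c n : ℝ) * r ^ (n + 1) := by
      intro n
      simp only [hc]
      push_cast
      rw [Finset.sum_mul]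
      apply Finset.sum_congr rfl
      intro j _
      rw [Set.indicator_apply]
      simp only [hv, hsg]
      split_ifs <;> ring
    have hc0 : ∀ n, c n = 0 := by
      apply digit_unique K c hcb
      rw [← hrdef, ← tsum_congr hveq]
      exact hy.symm
    set T : ℕ → Finset (Fin (k+1)) :=
      fun n => Finset.univ.filter (fun j => (n, j) ∈ B ∧ (j : ℕ) < k) with hT
    have hTcard : ∀ n, (T n).card ≤ 1 := by
      intro n
      set U : Finset (Fin (k+1)) :=
        Finset.univ.filter (fun j => (n, j) ∈ B ∧ ¬ (j : ℕ) < k) with hU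
      have hU1 : U.card ≤ 1 := by
        apply Finset.card_le_one.mpr
        intro x hx y hy
        have hx' := (Finset.mem_filter.mp hx).2.2
        have hy' := (Finset.mem_filter.mp hy).2.2
        have hxk := x.isLt
        have hyk := y.isLt
        apply Fin.ext
        omega
      have hcn : c n = (T n).card - U.card := by
        simp only [hc]
        have hsplit : ∀ j : Fin (k+1),
            (if (n, j) ∈ B then (if (j : ℕ) < k then (1:ℤ) else -1) else 0) =
            (if ((n, j) ∈ B ∧ (j : ℕ) < k) then (1:ℤ) else 0) +
            (if ((n, j) ∈ B ∧ ¬ (j : ℕ) < k) then (-1:ℤ) else 0) := by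
          intro j
          by_cases hB1 : (n, j) ∈ B <;> by_cases h2 : (j : ℕ) < k <;> simp [hB1, h2]
        rw [Finset.sum_congr rfl (fun j _ => hsplit j), Finset.sum_add_distrib]
        congr 1
        · rw [Finset.sum_boole]
        · have h5 : ∀ j : Fin (k+1),
              (if ((n, j) ∈ B ∧ ¬ (j : ℕ) < k) then (-1:ℤ) else 0) =
              -(if ((n, j) ∈ B ∧ ¬ (j : ℕ) < k) then (1:ℤ) else 0) := by
            intro j; split_ifs <;> simp
          rw [Finset.sum_congr rfl (fun j _ => h5 j), Finset.sum_neg_distrib, Finset.sum_boole]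
      have := hc0 n
      omega
    refine ⟨fun n => ∑ j ∈ T n, p' j, ?_, ?_⟩
    · intro n
      show (∑ j ∈ T n, p' j) ∈ P
      rcases Nat.le_one_iff_eq_zero_or_eq_one.mp (hTcard n) with h | h
      · rw [Finset.card_eq_zero.mp h]
        simpa using hP0
      · obtain ⟨j0, hj0⟩ := Finset.card_eq_one.mp h
        rw [hj0, Finset.sum_singleton]
        have hj0T : j0 ∈ T n := hj0 ▸ Finset.mem_singleton_self j0
        have hlt : (j0 : ℕ) < k := (Finset.mem_filter.mp hj0T).2.2
        simp only [hp']
        rw [dif_pos hlt]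
        exact (hpmem _).1
    · rw [hw]
      apply tsum_congr
      intro n
      rw [hind B u n]
      have : ∀ j : Fin (k+1), j ∈ Finset.univ.filter (fun j => (n, j) ∈ B) →
          u (n, j) = (if (j : ℕ) < k then p' j * a n else 0) := by
        intro j _
        simp only [hu, hp']
        split_ifs with h1
        · rfl
        · rw [zero_mul]
      rw [Finset.sum_congr rfl this, Finset.sum_ite, Finset.sum_const_zero, add_zero,
        Finset.filter_filter, ← Finset.sum_mul]
  · rintro ⟨ε, hεP, hεw⟩
    set B : Set (ℕ × Fin (k+1)) :=
      {q | ε q.1 ≠ 0 ∧ ((q.2 : ℕ) < k → p' q.2 = ε q.1)} with hBdef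
    refine ⟨B, ?_⟩
    rw [hFub B]
    have hblock : ∀ n : ℕ,
        ((∑ j : Fin (k+1), B.indicator u (n, j)) = ε n * a n) ∧
        ((∑ j : Fin (k+1), B.indicator v (n, j)) = 0) := by
      intro n
      by_cases hε : ε n = 0
      · have hnot : ∀ j : Fin (k+1), (n, j) ∉ B := fun j hj => hj.1 hε
        constructor
        · rw [Finset.sum_eq_zero (fun j _ => Set.indicator_of_notMem (hnot j) _), hε, zero_mul]
        · rw [Finset.sum_eq_zero (fun j _ => Set.indicator_of_notMem (hnot j) _)]
      · obtain ⟨j0, hj0⟩ := hpsurj (ε n) ⟨hεP n, hε⟩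
        have hcs : ((Fin.castSucc j0 : Fin (k+1)) : ℕ) < k := by
          rw [Fin.coe_castSucc]; exact j0.isLt
        have hp'cs : p' (Fin.castSucc j0) = p j0 := by
          simp only [hp']
          rw [dif_pos hcs]
          exact congrArg p (Fin.ext (by simp))
        have hp'last : p' (Fin.last k) = 0 := by
          simp only [hp']
          rw [dif_neg (by simp)]
        have hmem : ∀ j : Fin (k+1), ((n, j) ∈ B) ↔ (j = Fin.castSucc j0 ∨ j = Fin.last k) := by
          intro j
          constructor
          · rintro ⟨-, h2⟩
            by_cases hlt : (j : ℕ) < k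
            · left
              have h3 := h2 hlt
              simp only [hp'] at h3
              rw [dif_pos hlt] at h3
              have h4 := hpinj (h3.trans hj0.symm)
              apply Fin.ext
              rw [Fin.coe_castSucc]
              exact congrArg Fin.val h4
            · right
              apply Fin.ext
              have := j.isLt
              rw [Fin.val_last]
              omega
          · rintro (rfl | rfl)
            · exact ⟨hε, fun _ => hp'cs.trans hj0⟩
            · exact ⟨hε, fun h => absurd h (by simp)⟩
        have hne : (Fin.castSucc j0 : Fin (k+1)) ≠ Fin.last k := by
          intro h
          have := congrArg Fin.val h
          rw [Fin.coe_castSucc, Fin.val_last] at this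
          omega
        have key : ∀ f : ℕ × Fin (k+1) → ℝ, (∑ j : Fin (k+1), B.indicator f (n, j)) =
            f (n, Fin.castSucc j0) + f (n, Fin.last k) := by
          intro f
          have h6 : ∀ j : Fin (k+1), B.indicator f (n, j) =
              (if j ∈ ({Fin.castSucc j0, Fin.last k} : Finset (Fin (k+1))) then f (n, j)
                else 0) := by
            intro j
            rw [Set.indicator_apply]
            refine if_congr ?_ rfl rfl
            rw [hmem j]
            simp
          rw [Finset.sum_congr rfl (fun j _ => h6 j), Finset.sum_ite_mem, Finset.univ_inter,
            Finset.sum_pair hne]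
        constructor
        · rw [key u]
          simp only [hu]
          rw [hp'cs, hp'last, hj0, zero_mul, add_zero]
        · rw [key v]
          simp only [hv, hsg]
          rw [if_pos hcs, if_neg (by simp)]
          ring
    rw [tsum_congr (fun n => (hblock n).1), tsum_congr (fun n => (hblock n).2), tsum_zero, ← hεw]
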